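/- For any g ∈ ℝ, u ∈ [0,1], γ > 0, σ > 0 and 0 ≤ a ≤ b, one has H_γ(a,g,u) ≤ H_γ(b,g,u), where H_γ(c,g,u) = 1_{[0,∞)}(u − p̄(c,g)) · (c − 2(σ²γ)^{1/2} g) and p̄(c,g) = min(1, φ_{σ²γ}(c − (σ²γ)^{1/2} g)/φ_{σ²γ}((σ²γ)^{1/2} g)). -/
import Mathlib


open MeasureTheory

/-- Density of the one-dimensional centered Gaussian with variance `v`. -/
noncomputable def gpdf (v x : ℝ) : ℝ :=
  (Real.sqrt (2 * Real.pi * v))⁻¹ * Real.exp (-x ^ 2 / (2 * v))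

/-- `p̄(c, g) = min(1, φ_v(c − √v g) / φ_v(√v g))` with `v = σ²γ`. -/
noncomputable def pbar (v c g : ℝ) : ℝ :=
  min 1 (gpdf v (c - Real.sqrt v * g) / gpdf v (Real.sqrt v * g))

/-- `H_γ(c, g, u) = 1_{[0,∞)}(u − p̄(c,g)) · (c − 2 √(σ²γ) g)`. -/
noncomputable def Hfun (σ γ c g u : ℝ) : ℝ :=
  (if 0 ≤ u - pbar (σ ^ 2 * γ) c g then (1 : ℝ) else 0) *
    (c - 2 * Real.sqrt (σ ^ 2 * γ) * g)

lemma pbar_eq (v c g : ℝ) (hv : 0 < v) :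
    pbar v c g =
      min 1 (Real.exp ((c * (2 * Real.sqrt v * g - c)) / (2 * v))) := by
  have hA : (Real.sqrt (2 * Real.pi * v))⁻¹ ≠ 0 := by
    have : (0:ℝ) < Real.sqrt (2 * Real.pi * v) :=
      Real.sqrt_pos.2 (by positivity)
    positivity
  unfold pbar gpdf
  rw [mul_div_mul_left _ _ hA, ← Real.exp_sub]
  congr 2
  field_simp
  ring

theorem Hfun_mono (σ γ g u a b : ℝ) (hσ : 0 < σ) (hγ : 0 < γ)
    (hu : u ∈ Set.Icc (0 : ℝ) 1) (ha : 0 ≤ a) (hab : a ≤ b) :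
    Hfun σ γ a g u ≤ Hfun σ γ b g u := by
  set v : ℝ := σ ^ 2 * γ with hvdef
  have hv : 0 < v := by positivity
  set s : ℝ := Real.sqrt v with hsdef
  have hs : 0 < s := Real.sqrt_pos.2 hv
  have hb0 : 0 ≤ b := le_trans ha hab
  -- helper: indicator is 0 or 1
  have hind : ∀ c : ℝ, (0:ℝ) ≤ if 0 ≤ u - pbar v c g then (1:ℝ) else 0 := by
    intro c; split <;> norm_num
  -- helper: pbar = 1 when 0 ≤ c ≤ 2 s g
  have hpbar_one : ∀ c : ℝ, 0 ≤ c → c ≤ 2 * s * g → pbar v c g = 1 := by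
    intro c hc hc2
    rw [pbar_eq v c g hv]
    refine min_eq_left (Real.one_le_exp ?_)
    have : 0 ≤ c * (2 * s * g - c) := mul_nonneg hc (by linarith)
    positivity
  unfold Hfun
  rw [← hvdef, ← hsdef]
  rcases le_total b (2 * s * g) with hb | hb
  · -- both a, b ≤ 2 s g : pbar equal to 1 for both
    rw [hpbar_one a ha (le_trans hab hb), hpbar_one b hb0 hb]
    exact mul_le_mul_of_nonneg_left (by linarith) (by split <;> norm_num)
  · rcases le_total (2 * s * g) a with ha2 | ha2
    · -- both ≥ 2 s g
      have hpb : pbar v b g ≤ pbar v a g := by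
        rw [pbar_eq v a g hv, pbar_eq v b g hv]
        refine min_le_min le_rfl (Real.exp_le_exp.2 ?_)
        apply div_le_div_of_nonneg_right ?_ (by positivity)
        nlinarith [mul_nonneg (sub_nonneg.2 hab) (by linarith : 0 ≤ a + b - 2 * s * g)]
      have hι : (if 0 ≤ u - pbar v a g then (1:ℝ) else 0) ≤
          (if 0 ≤ u - pbar v b g then (1:ℝ) else 0) := by
        split
        · rw [if_pos (by linarith)]
        · split <;> norm_num
      calc (if 0 ≤ u - pbar v a g then (1:ℝ) else 0) * (a - 2 * s * g)
          ≤ (if 0 ≤ u - pbar v b g then (1:ℝ) else 0) * (a - 2 * s * g) :=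
            mul_le_mul_of_nonneg_right hι (by linarith)
        _ ≤ (if 0 ≤ u - pbar v b g then (1:ℝ) else 0) * (b - 2 * s * g) :=
            mul_le_mul_of_nonneg_left (by linarith) (hind b)
    · -- a ≤ 2 s g ≤ b
      have h1 : (if 0 ≤ u - pbar v a g then (1:ℝ) else 0) * (a - 2 * s * g) ≤ 0 :=
        mul_nonpos_of_nonneg_of_nonpos (hind a) (by linarith)
      have h2 : 0 ≤ (if 0 ≤ u - pbar v b g then (1:ℝ) else 0) * (b - 2 * s * g) :=
        mul_nonneg (hind b) (by linarith)
      linarith
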